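/- arXiv:1210.3536 — 2 statements merged into one kernel-verified Lean document; each statement's English description precedes it below -/
import Mathlib

section
/- For φ, ψ ∈ [0, 2π) the following hold: (i) if N₊(φ) = N₊(ψ) then φ = ψ; (ii) if N₋(φ) = N₋(ψ) then φ = ψ; (iii) N₊(φ) ≠ N₋(ψ) for all φ, ψ ∈ [0, 2π). Consequently the set of 2-dimensional totally null subspaces of (ℝ⁴, B) is a disjoint union of two families, each parametrized bijectively by the circle [0, 2π). -/
/-- The standard split signature bilinear form on ℝ⁴ = ℝ^(2,2). -/
def B (y z : Fin 4 → ℝ) : ℝ := y 0 * z 0 + y 1 * z 1 - y 2 * z 2 - y 3 * z 3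

/-- A subspace of ℝ⁴ is totally null w.r.t. `B` if `B` vanishes identically on it. -/
def TotallyNull (N : Submodule ℝ (Fin 4 → ℝ)) : Prop :=
  ∀ v ∈ N, ∀ w ∈ N, B v w = 0

/-- The selfdual totally null plane `N₊(φ)`. -/
noncomputable def Nplus (φ : ℝ) : Submodule ℝ (Fin 4 → ℝ) :=
  Submodule.span ℝ {![1, 0, Real.cos φ, Real.sin φ], ![0, 1, Real.sin φ, -Real.cos φ]}

/-- The antiselfdual totally null plane `N₋(φ)`. -/
noncomputable def Nminus (φ : ℝ) : Submodule ℝ (Fin 4 → ℝ) :=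
  Submodule.span ℝ {![1, 0, Real.cos φ, Real.sin φ], ![0, 1, -Real.sin φ, Real.cos φ]}

lemma span_mem_iff (u w x : Fin 4 → ℝ) (hu0 : u 0 = 1) (hu1 : u 1 = 0)
    (hw0 : w 0 = 0) (hw1 : w 1 = 1) :
    x ∈ Submodule.span ℝ {u, w} ↔ x = x 0 • u + x 1 • w := by
  rw [Submodule.mem_span_pair]
  constructor
  · rintro ⟨a, b, rfl⟩
    simp [hu0, hu1, hw0, hw1]
  · intro h
    exact ⟨x 0, x 1, h.symm⟩

lemma finrank_span_two (u w : Fin 4 → ℝ) (hu0 : u 0 = 1) (hu1 : u 1 = 0)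
    (hw0 : w 0 = 0) (hw1 : w 1 = 1) :
    Module.finrank ℝ (Submodule.span ℝ {u, w}) = 2 := by
  have hli : LinearIndependent ℝ ![u, w] := by
    rw [LinearIndependent.pair_iff]
    intro s t h
    constructor
    · have := congrFun h 0; simpa [hu0, hw0] using this
    · have := congrFun h 1; simpa [hu1, hw1] using this
  have := finrank_span_eq_card (R := ℝ) hli
  have hr : Set.range ![u, w] = {u, w} := by
    simp [Matrix.range_cons, Set.pair_comm]
  rw [hr] at this
  simpa using this

lemma cos_sin_eq_of_Ico {φ ψ : ℝ} (hφ : φ ∈ Set.Ico (0:ℝ) (2*Real.pi))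
    (hψ : ψ ∈ Set.Ico (0:ℝ) (2*Real.pi)) (hc : Real.cos φ = Real.cos ψ)
    (hs : Real.sin φ = Real.sin ψ) : φ = ψ := by
  have h := Real.Angle.cos_sin_inj hc hs
  rw [Real.Angle.angle_eq_iff_two_pi_dvd_sub] at h
  obtain ⟨k, hk⟩ := h
  have hπ := Real.pi_pos
  have hb : |φ - ψ| < 2 * Real.pi := by
    rw [abs_sub_lt_iff]; constructor <;> nlinarith [hφ.1, hφ.2, hψ.1, hψ.2]
  rw [hk, abs_mul, abs_of_pos (by linarith : (0:ℝ) < 2*Real.pi)] at hb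
  have h1 : |(k:ℝ)| < 1 := by nlinarith
  have h2 : k = 0 := by
    have h3 : (-1:ℝ) < k ∧ (k:ℝ) < 1 := abs_lt.mp h1
    have hl : (-1:ℤ) < k := by exact_mod_cast h3.1
    have hr : k < (1:ℤ) := by exact_mod_cast h3.2
    omega
  rw [h2] at hk; push_cast at hk; linarith

lemma exists_angle {a b : ℝ} (h : a^2 + b^2 = 1) :
    ∃ θ ∈ Set.Ico (0:ℝ) (2*Real.pi), Real.cos θ = a ∧ Real.sin θ = b := by
  have ha1 : -1 ≤ a := by nlinarith
  have ha2 : a ≤ 1 := by nlinarith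
  have hπ := Real.pi_pos
  rcases le_or_gt 0 b with hb | hb
  · refine ⟨Real.arccos a, ⟨Real.arccos_nonneg a, lt_of_le_of_lt (Real.arccos_le_pi a) (by linarith)⟩,
      Real.cos_arccos ha1 ha2, ?_⟩
    rw [Real.sin_arccos]
    rw [show 1 - a^2 = b^2 by linarith, Real.sqrt_sq hb]
  · have harc : 0 < Real.arccos a := by
      rcases lt_or_eq_of_le (Real.arccos_nonneg a) with h' | h'
      · exact h'
      · exfalso
        have : a = 1 := by
          have := Real.cos_arccos ha1 ha2
          rw [← h'] at this; simpa using this.symm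
        nlinarith
    refine ⟨2*Real.pi - Real.arccos a, ⟨by nlinarith [Real.arccos_le_pi a], by linarith⟩, ?_, ?_⟩
    · rw [Real.cos_sub, Real.cos_two_pi, Real.sin_two_pi]
      simpa using Real.cos_arccos ha1 ha2
    · rw [Real.sin_sub, Real.cos_two_pi, Real.sin_two_pi, Real.sin_arccos]
      rw [show 1 - a^2 = b^2 by linarith, Real.sqrt_sq_eq_abs, abs_of_neg hb]
      ring

lemma mem_Nplus_iff (φ : ℝ) (x : Fin 4 → ℝ) :
    x ∈ Nplus φ ↔ x = x 0 • ![1, 0, Real.cos φ, Real.sin φ]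
      + x 1 • ![0, 1, Real.sin φ, -Real.cos φ] := by
  apply span_mem_iff <;> simp

lemma mem_Nminus_iff (φ : ℝ) (x : Fin 4 → ℝ) :
    x ∈ Nminus φ ↔ x = x 0 • ![1, 0, Real.cos φ, Real.sin φ]
      + x 1 • ![0, 1, -Real.sin φ, Real.cos φ] := by
  apply span_mem_iff <;> simp

lemma nplus_totallyNull (φ : ℝ) : TotallyNull (Nplus φ) := by
  intro v hv w hw
  rw [mem_Nplus_iff] at hv hw
  rw [hv, hw]
  simp only [B, Pi.add_apply, Pi.smul_apply, smul_eq_mul, Matrix.cons_val_zero,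
    Matrix.cons_val_one, Matrix.head_cons, Matrix.cons_val_two, Matrix.tail_cons,
    Matrix.cons_val_three, Matrix.head_fin_const]
  linear_combination (-(v 0 * w 0 + v 1 * w 1)) * Real.sin_sq_add_cos_sq φ

lemma nminus_totallyNull (φ : ℝ) : TotallyNull (Nminus φ) := by
  intro v hv w hw
  rw [mem_Nminus_iff] at hv hw
  rw [hv, hw]
  simp only [B, Pi.add_apply, Pi.smul_apply, smul_eq_mul, Matrix.cons_val_zero,
    Matrix.cons_val_one, Matrix.head_cons, Matrix.cons_val_two, Matrix.tail_cons,
    Matrix.cons_val_three, Matrix.head_fin_const]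
  linear_combination (-(v 0 * w 0 + v 1 * w 1)) * Real.sin_sq_add_cos_sq φ

lemma nplus_finrank (φ : ℝ) : Module.finrank ℝ (Nplus φ) = 2 := by
  apply finrank_span_two <;> simp

lemma nminus_finrank (φ : ℝ) : Module.finrank ℝ (Nminus φ) = 2 := by
  apply finrank_span_two <;> simp

/-- The hard direction : every 2-dimensional totally null plane is `Nplus` or `Nminus`. -/
lemma classify (N : Submodule ℝ (Fin 4 → ℝ)) (hdim : Module.finrank ℝ N = 2)
    (hN : TotallyNull N) :
    (∃ θ ∈ Set.Ico (0:ℝ) (2*Real.pi), N = Nplus θ) ∨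
    (∃ θ ∈ Set.Ico (0:ℝ) (2*Real.pi), N = Nminus θ) := by
  -- the projection to the first two coordinates
  let p : (Fin 4 → ℝ) →ₗ[ℝ] (Fin 2 → ℝ) :=
    LinearMap.funLeft ℝ ℝ (Fin.castLE (by norm_num : 2 ≤ 4))
  let q : N →ₗ[ℝ] (Fin 2 → ℝ) := LinearMap.comp p N.subtype
  have hq_inj : Function.Injective q := by
    rw [← LinearMap.ker_eq_bot]
    rw [Submodule.eq_bot_iff]
    rintro ⟨v, hv⟩ hker
    have h0 : v 0 = 0 := congrFun (show p v = 0 from hker) 0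
    have h1 : v 1 = 0 := congrFun (show p v = 0 from hker) 1
    have hBv := hN v hv v hv
    simp only [B, h0, h1] at hBv
    have h2 : v 2 = 0 := by nlinarith [sq_nonneg (v 2), sq_nonneg (v 3)]
    have h3 : v 3 = 0 := by nlinarith [sq_nonneg (v 2), sq_nonneg (v 3)]
    ext i
    fin_cases i <;> simp [h0, h1, h2, h3]
  have hq_surj : Function.Surjective q := by
    have hrank : Module.finrank ℝ N = Module.finrank ℝ (Fin 2 → ℝ) := by
      simp [hdim]
    exact (LinearMap.injective_iff_surjective_of_finrank_eq_finrank hrank).mp hq_inj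
  obtain ⟨⟨u, huN⟩, hu⟩ := hq_surj ![1, 0]
  obtain ⟨⟨w, hwN⟩, hw⟩ := hq_surj ![0, 1]
  have hu0 : u 0 = 1 := congrFun hu 0
  have hu1 : u 1 = 0 := congrFun hu 1
  have hw0 : w 0 = 0 := congrFun hw 0
  have hw1 : w 1 = 1 := congrFun hw 1
  set a := u 2 with ha_def
  set b := u 3 with hb_def
  set c := w 2 with hc_def
  set d := w 3 with hd_def
  have hBuu := hN u huN u huN
  have hBww := hN w hwN w hwN
  have hBuw := hN u huN w hwN
  simp only [B, hu0, hu1, hw0, hw1] at hBuu hBww hBuw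
  have ha : a^2 + b^2 = 1 := by nlinarith
  have hc : c^2 + d^2 = 1 := by nlinarith
  have hac : a*c + b*d = 0 := by nlinarith
  have hβc : c = (b*c - a*d) * b := by linear_combination (-c) * ha + a * hac
  have hβd : d = -((b*c - a*d) * a) := by linear_combination (-d) * ha + b * hac
  have hβ2 : (b*c - a*d)^2 = 1 := by
    linear_combination (c^2 + d^2) * ha + hc - (a*c + b*d) * hac
  obtain ⟨θ, hθmem, hcos, hsin⟩ := exists_angle ha
  -- N = span {u, w}
  have hspan : Submodule.span ℝ {u, w} = N := by
    apply Submodule.eq_of_le_of_finrank_le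
    · rw [Submodule.span_le]
      rintro x (rfl | rfl)
      · exact huN
      · exact hwN
    · rw [hdim, finrank_span_two u w hu0 hu1 hw0 hw1]
  have hu_eq : u = ![1, 0, Real.cos θ, Real.sin θ] := by
    ext i
    fin_cases i <;> simp [hu0, hu1, hcos, hsin, ← ha_def, ← hb_def]
  have hβ : (b*c - a*d) = 1 ∨ (b*c - a*d) = -1 := by
    have : ((b*c - a*d) - 1) * ((b*c - a*d) + 1) = 0 := by linear_combination hβ2
    rcases mul_eq_zero.mp this with h | h
    · left; linarith
    · right; linarith
  rcases hβ with hβ | hβ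
  · left
    refine ⟨θ, hθmem, ?_⟩
    have hw_eq : w = ![0, 1, Real.sin θ, -Real.cos θ] := by
      have hc' : c = b := by rw [hβc, hβ]; ring
      have hd' : d = -a := by rw [hβd, hβ]; ring
      ext i
      fin_cases i <;> simp [hw0, hw1, hcos, hsin, ← hc_def, ← hd_def, hc', hd']
    rw [← hspan, hu_eq, hw_eq, Nplus]
  · right
    refine ⟨θ, hθmem, ?_⟩
    have hw_eq : w = ![0, 1, -Real.sin θ, Real.cos θ] := by
      have hc' : c = -b := by rw [hβc, hβ]; ring
      have hd' : d = a := by rw [hβd, hβ]; ring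
      ext i
      fin_cases i <;> simp [hw0, hw1, hcos, hsin, ← hc_def, ← hd_def, hc', hd']
    rw [← hspan, hu_eq, hw_eq, Nminus]

lemma nplus_inj : ∀ φ ∈ Set.Ico (0:ℝ) (2*Real.pi), ∀ ψ ∈ Set.Ico (0:ℝ) (2*Real.pi),
    Nplus φ = Nplus ψ → φ = ψ := by
  intro φ hφ ψ hψ h
  have hmem : (![1, 0, Real.cos φ, Real.sin φ] : Fin 4 → ℝ) ∈ Nplus ψ := by
    rw [← h, Nplus]
    exact Submodule.subset_span (by simp)
  rw [mem_Nplus_iff] at hmem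
  simp at hmem
  exact cos_sin_eq_of_Ico hφ hψ hmem.1 hmem.2

lemma nminus_inj : ∀ φ ∈ Set.Ico (0:ℝ) (2*Real.pi), ∀ ψ ∈ Set.Ico (0:ℝ) (2*Real.pi),
    Nminus φ = Nminus ψ → φ = ψ := by
  intro φ hφ ψ hψ h
  have hmem : (![1, 0, Real.cos φ, Real.sin φ] : Fin 4 → ℝ) ∈ Nminus ψ := by
    rw [← h, Nminus]
    exact Submodule.subset_span (by simp)
  rw [mem_Nminus_iff] at hmem
  simp at hmem
  exact cos_sin_eq_of_Ico hφ hψ hmem.1 hmem.2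

lemma nplus_ne_nminus (φ ψ : ℝ) : Nplus φ ≠ Nminus ψ := by
  intro h
  have hmem1 : (![1, 0, Real.cos φ, Real.sin φ] : Fin 4 → ℝ) ∈ Nminus ψ := by
    rw [← h, Nplus]
    exact Submodule.subset_span (by simp)
  have hmem2 : (![0, 1, Real.sin φ, -Real.cos φ] : Fin 4 → ℝ) ∈ Nminus ψ := by
    rw [← h, Nplus]
    exact Submodule.subset_span (by simp)
  rw [mem_Nminus_iff] at hmem1 hmem2
  simp at hmem1 hmem2
  have h1 : Real.cos φ = Real.cos ψ := hmem1.1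
  have h2 : Real.sin φ = Real.sin ψ := hmem1.2
  have h3 : Real.sin φ = -Real.sin ψ := hmem2.1
  have h4 : -Real.cos φ = Real.cos ψ := hmem2.2
  nlinarith [Real.sin_sq_add_cos_sq ψ]

theorem stmt_3 :
    (∀ φ ∈ Set.Ico (0 : ℝ) (2 * Real.pi), ∀ ψ ∈ Set.Ico (0 : ℝ) (2 * Real.pi),
      Nplus φ = Nplus ψ → φ = ψ) ∧
    (∀ φ ∈ Set.Ico (0 : ℝ) (2 * Real.pi), ∀ ψ ∈ Set.Ico (0 : ℝ) (2 * Real.pi),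
      Nminus φ = Nminus ψ → φ = ψ) ∧
    (∀ φ ∈ Set.Ico (0 : ℝ) (2 * Real.pi), ∀ ψ ∈ Set.Ico (0 : ℝ) (2 * Real.pi),
      Nplus φ ≠ Nminus ψ) ∧
    {N : Submodule ℝ (Fin 4 → ℝ) | Module.finrank ℝ N = 2 ∧ TotallyNull N} =
      (Nplus '' Set.Ico (0 : ℝ) (2 * Real.pi)) ∪
      (Nminus '' Set.Ico (0 : ℝ) (2 * Real.pi)) ∧
    Disjoint (Nplus '' Set.Ico (0 : ℝ) (2 * Real.pi))
      (Nminus '' Set.Ico (0 : ℝ) (2 * Real.pi)) := by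
  refine ⟨nplus_inj, nminus_inj, fun φ _ ψ _ => nplus_ne_nminus φ ψ, ?_, ?_⟩
  · ext N
    constructor
    · rintro ⟨hdim, hnull⟩
      rcases classify N hdim hnull with ⟨θ, hθ, rfl⟩ | ⟨θ, hθ, rfl⟩
      · exact Or.inl ⟨θ, hθ, rfl⟩
      · exact Or.inr ⟨θ, hθ, rfl⟩
    · rintro (⟨θ, hθ, rfl⟩ | ⟨θ, hθ, rfl⟩)
      · exact ⟨nplus_finrank θ, nplus_totallyNull θ⟩
      · exact ⟨nminus_finrank θ, nminus_totallyNull θ⟩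
  · rw [Set.disjoint_left]
    rintro N ⟨φ, hφ, rfl⟩ ⟨ψ, hψ, h⟩
    exact nplus_ne_nminus φ ψ h.symm
end

section
/- Define h(ρ) = ∫₁^ρ √(s⁴ − 1) ds for ρ ≥ 1, and define F(ρ, φ) = (ρ cos φ, ρ sin φ, h(ρ)) for ρ > 1 and φ ∈ ℝ. Then for every such (ρ, φ) the partial derivatives of F satisfy, with respect to the Euclidean inner product ⟨·,·⟩ on ℝ³: ⟨∂F/∂ρ, ∂F/∂ρ⟩ = ρ⁴, ⟨∂F/∂ρ, ∂F/∂φ⟩ = 0, and ⟨∂F/∂φ, ∂F/∂φ⟩ = ρ²; that is, F is an isometric immersion of the metric g₁ₒ = ρ⁴ dρ² + ρ² dφ², restricted to ρ > 1, into Euclidean ℝ³ as a surface of revolution Z = f(√(X² + Y²)) with f(t) = ∫₁^t √(s⁴ − 1) ds. -/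
/-- The Euclidean inner product on ℝ³. -/
def dot3 (u v : Fin 3 → ℝ) : ℝ := u 0 * v 0 + u 1 * v 1 + u 2 * v 2

/-- `h(ρ) = ∫₁^ρ √(s⁴ - 1) ds`. -/
noncomputable def hInt (ρ : ℝ) : ℝ := ∫ s in (1 : ℝ)..ρ, Real.sqrt (s ^ 4 - 1)

/-- The embedding `F(ρ,φ) = (ρ cos φ, ρ sin φ, h(ρ))` of the portion `ρ > 1` of the
surface `g₁ₒ = ρ⁴ dρ² + ρ² dφ²` into ℝ³ as a surface of revolution. -/
noncomputable def Fo (ρ φ : ℝ) : Fin 3 → ℝ :=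
  ![ρ * Real.cos φ, ρ * Real.sin φ, hInt ρ]

lemma hInt_deriv (ρ : ℝ) : HasDerivAt hInt (Real.sqrt (ρ ^ 4 - 1)) ρ := by
  have hc : Continuous fun s : ℝ => Real.sqrt (s ^ 4 - 1) := by continuity
  exact intervalIntegral.integral_hasDerivAt_right
    (hc.intervalIntegrable _ _) (hc.stronglyMeasurableAtFilter _ _) hc.continuousAt

lemma derivR (ρ φ : ℝ) :
    deriv (fun r => Fo r φ) ρ = ![Real.cos φ, Real.sin φ, Real.sqrt (ρ ^ 4 - 1)] := by
  have h : HasDerivAt (fun r => Fo r φ)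
      ![Real.cos φ, Real.sin φ, Real.sqrt (ρ ^ 4 - 1)] ρ := by
    apply hasDerivAt_pi.2
    intro i
    fin_cases i
    · simpa [Fo] using (hasDerivAt_id ρ).mul_const (Real.cos φ)
    · simpa [Fo] using (hasDerivAt_id ρ).mul_const (Real.sin φ)
    · simpa [Fo] using hInt_deriv ρ
  exact h.deriv

lemma derivP (ρ φ : ℝ) :
    deriv (fun t => Fo ρ t) φ = ![-(ρ * Real.sin φ), ρ * Real.cos φ, 0] := by
  have h : HasDerivAt (fun t => Fo ρ t)
      ![-(ρ * Real.sin φ), ρ * Real.cos φ, 0] φ := by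
    apply hasDerivAt_pi.2
    intro i
    fin_cases i
    · simpa [Fo, mul_comm] using (Real.hasDerivAt_cos φ).const_mul ρ
    · simpa [Fo] using (Real.hasDerivAt_sin φ).const_mul ρ
    · simpa [Fo] using hasDerivAt_const φ (hInt ρ)
  exact h.deriv

theorem stmt_17 :
    ∀ ρ φ : ℝ, 1 < ρ →
      -- F is an isometric immersion of g₁ₒ = ρ⁴ dρ² + ρ² dφ² for ρ > 1
      dot3 (deriv (fun r => Fo r φ) ρ) (deriv (fun r => Fo r φ) ρ) = ρ ^ 4 ∧
      dot3 (deriv (fun r => Fo r φ) ρ) (deriv (fun t => Fo ρ t) φ) = 0 ∧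
      dot3 (deriv (fun t => Fo ρ t) φ) (deriv (fun t => Fo ρ t) φ) = ρ ^ 2 ∧
      -- F is a surface of revolution: Z = f(√(X² + Y²)) with f(t) = ∫₁^t √(s⁴-1) ds
      Fo ρ φ 2 = hInt (Real.sqrt ((Fo ρ φ 0) ^ 2 + (Fo ρ φ 1) ^ 2)) := by
  intro ρ φ hρ
  have h1 : (0:ℝ) < ρ := lt_trans one_pos hρ
  have h4 : ρ ^ 4 - 1 ≥ 0 := by nlinarith [sq_nonneg (ρ^2-1), sq_nonneg (ρ-1), sq_nonneg ρ]
  have hsq : Real.sqrt (ρ ^ 4 - 1) * Real.sqrt (ρ ^ 4 - 1) = ρ ^ 4 - 1 :=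
    Real.mul_self_sqrt h4
  have hcs := Real.sin_sq_add_cos_sq φ
  refine ⟨?_, ?_, ?_, ?_⟩
  · rw [derivR]; simp only [dot3, Matrix.cons_val_zero, Matrix.cons_val_one,
      Matrix.head_cons, Matrix.cons_val_two, Matrix.tail_cons]
    nlinarith
  · rw [derivR, derivP]; simp only [dot3, Matrix.cons_val_zero, Matrix.cons_val_one,
      Matrix.head_cons, Matrix.cons_val_two, Matrix.tail_cons]
    ring
  · rw [derivP]; simp only [dot3, Matrix.cons_val_zero, Matrix.cons_val_one,
      Matrix.head_cons, Matrix.cons_val_two, Matrix.tail_cons]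
    nlinarith
  · have : (Fo ρ φ 0) ^ 2 + (Fo ρ φ 1) ^ 2 = ρ ^ 2 := by
      simp only [Fo, Matrix.cons_val_zero, Matrix.cons_val_one, Matrix.head_cons]
      nlinarith
    rw [this, Real.sqrt_sq h1.le]
    simp [Fo]
end
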